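/- For every integer m ≥ 0, the function μ ↦ 2·cos μ − μ·sin μ has exactly one zero in the open interval (mπ, (m+1)π); equivalently, for each integer k ≥ 1 there exists a unique μ_k ∈ ((k−1)π, kπ) satisfying the characteristic equation 2 cos μ_k = μ_k sin μ_k (i.e. μ_k = 2 cot μ_k). Consequently the sequence (μ_k) is strictly increasing and no μ_k is an integer multiple of π. -/

import Mathlib

open Real Set

lemma sin_ne_zero_Ioo {m : ℕ} {x : ℝ} (hx : x ∈ Ioo ((m : ℝ) * π) (((m : ℝ) + 1) * π)) :
    Real.sin x ≠ 0 := by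
  intro h
  obtain ⟨n, hn⟩ := Real.sin_eq_zero_iff.mp h
  subst hn
  have hπ := Real.pi_pos
  have h1 : (m : ℝ) < n := by nlinarith [hx.1]
  have h2 : (n : ℝ) < (m : ℝ) + 1 := by nlinarith [hx.2]
  have h1' : (m : ℤ) < n := by exact_mod_cast h1
  have h2' : n < (m : ℤ) + 1 := by exact_mod_cast h2
  omega

lemma cos_nat_pi (n : ℕ) : Real.cos ((n : ℝ) * π) = (-1) ^ n := by
  simpa using Real.cos_nat_mul_pi_sub 0 n

noncomputable def gfun : ℝ → ℝ := fun x => 2 * Real.cos x / Real.sin x - x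

lemma gfun_hasDeriv {x : ℝ} (hs : Real.sin x ≠ 0) :
    HasDerivAt gfun (-2 / Real.sin x ^ 2 - 1) x := by
  have h1 : HasDerivAt (fun x => 2 * Real.cos x) (2 * (-Real.sin x)) x :=
    (Real.hasDerivAt_cos x).const_mul 2
  have hdiv := h1.div (Real.hasDerivAt_sin x) hs
  have h := hdiv.sub (hasDerivAt_id x)
  convert (show HasDerivAt gfun _ x from h) using 1
  have hc := Real.sin_sq_add_cos_sq x
  field_simp
  nlinarith [hc]

lemma gfun_strictAntiOn (m : ℕ) :
    StrictAntiOn gfun (Ioo ((m : ℝ) * π) (((m : ℝ) + 1) * π)) := by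
  apply strictAntiOn_of_deriv_neg (convex_Ioo _ _)
  · intro x hx
    exact ((gfun_hasDeriv (sin_ne_zero_Ioo hx)).continuousAt).continuousWithinAt
  · intro x hx
    rw [interior_Ioo] at hx
    have hs := sin_ne_zero_Ioo hx
    rw [(gfun_hasDeriv hs).deriv]
    have h2 : (0:ℝ) < Real.sin x ^ 2 := by positivity
    have : -2 / Real.sin x ^ 2 < 0 := div_neg_of_neg_of_pos (by norm_num) h2
    linarith

lemma root_iff {m : ℕ} {x : ℝ} (hx : x ∈ Ioo ((m : ℝ) * π) (((m : ℝ) + 1) * π)) :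
    2 * Real.cos x - x * Real.sin x = 0 ↔ gfun x = 0 := by
  have hs := sin_ne_zero_Ioo hx
  unfold gfun
  rw [sub_eq_zero, sub_eq_zero, div_eq_iff hs]

theorem dirichlet_char_unique_root :
    (∀ m : ℕ, ∃! μ : ℝ, μ ∈ Ioo ((m : ℝ) * π) (((m : ℝ) + 1) * π) ∧
      2 * Real.cos μ - μ * Real.sin μ = 0) ∧
    (∀ μ : ℕ → ℝ,
      (∀ k : ℕ, 1 ≤ k → μ k ∈ Ioo (((k : ℝ) - 1) * π) ((k : ℝ) * π) ∧
        2 * Real.cos (μ k) = μ k * Real.sin (μ k)) →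
      StrictMonoOn μ (Set.Ici 1) ∧
      ∀ k : ℕ, 1 ≤ k → ∀ m : ℤ, μ k ≠ (m : ℝ) * π) := by
  have hπ := Real.pi_pos
  constructor
  · intro m
    set f : ℝ → ℝ := fun x => 2 * Real.cos x - x * Real.sin x with hf
    have hcont : ContinuousOn f (Icc ((m : ℝ) * π) (((m : ℝ) + 1) * π)) := by
      fun_prop
    have hle : (m : ℝ) * π ≤ ((m : ℝ) + 1) * π := by nlinarith
    have hsa : Real.sin ((m : ℝ) * π) = 0 := by
      have := Real.sin_int_mul_pi (m : ℤ); simpa using this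
    have hsb : Real.sin (((m : ℝ) + 1) * π) = 0 := by
      have := Real.sin_int_mul_pi ((m : ℤ) + 1); push_cast at this; simpa using this
    have hfa : f ((m : ℝ) * π) = 2 * (-1 : ℝ) ^ m := by
      simp [hf, cos_nat_pi m, hsa]
    have hfb : f (((m : ℝ) + 1) * π) = 2 * (-1 : ℝ) ^ (m + 1) := by
      have h1 : ((m : ℝ) + 1) = ((m + 1 : ℕ) : ℝ) := by push_cast; ring
      rw [hf]
      simp only [h1, cos_nat_pi (m + 1)]
      have hsb' : Real.sin (((m + 1 : ℕ) : ℝ) * π) = 0 := by rw [← h1]; exact hsb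
      rw [hsb']; ring
    have hex : ∃ x ∈ Ioo ((m : ℝ) * π) (((m : ℝ) + 1) * π), f x = 0 := by
      rcases Nat.even_or_odd m with he | ho
      · have h0 : (0:ℝ) ∈ Ioo (f (((m : ℝ) + 1) * π)) (f ((m : ℝ) * π)) := by
          rw [hfa, hfb, he.neg_one_pow, (he.add_one).neg_one_pow]
          constructor <;> norm_num
        obtain ⟨x, hx, hx0⟩ := intermediate_value_Ioo' hle hcont h0
        exact ⟨x, hx, hx0⟩
      · have h0 : (0:ℝ) ∈ Ioo (f ((m : ℝ) * π)) (f (((m : ℝ) + 1) * π)) := by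
          rw [hfa, hfb, ho.neg_one_pow, (ho.add_one).neg_one_pow]
          constructor <;> norm_num
        obtain ⟨x, hx, hx0⟩ := intermediate_value_Ioo hle hcont h0
        exact ⟨x, hx, hx0⟩
    obtain ⟨x, hx, hx0⟩ := hex
    refine ⟨x, ⟨hx, hx0⟩, ?_⟩
    rintro y ⟨hy, hy0⟩
    have hgx : gfun x = 0 := (root_iff hx).mp hx0
    have hgy : gfun y = 0 := (root_iff hy).mp hy0
    exact (gfun_strictAntiOn m).injOn hy hx (hgy.trans hgx.symm)
  · intro μ hμ
    have hnp : ∀ k : ℕ, 1 ≤ k → ∀ m : ℤ, μ k ≠ (m : ℝ) * π := by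
      intro k hk m heq
      obtain ⟨_, heqn⟩ := hμ k hk
      have hs : Real.sin (μ k) = 0 := by
        rw [heq]; exact Real.sin_int_mul_pi m
      have hc : Real.cos (μ k) = 0 := by
        rw [hs, mul_zero] at heqn; linarith
      have := Real.sin_sq_add_cos_sq (μ k)
      rw [hs, hc] at this; norm_num at this
    refine ⟨?_, hnp⟩
    intro a ha b hb hab
    obtain ⟨haI, _⟩ := hμ a ha
    obtain ⟨hbI, _⟩ := hμ b hb
    have h1 : (a : ℝ) + 1 ≤ (b : ℝ) := by exact_mod_cast hab
    calc μ a < (a : ℝ) * π := haI.2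
      _ ≤ ((b : ℝ) - 1) * π := by nlinarith
      _ < μ b := hbI.1
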